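/- The Gromov hyperbolicity functional D ↦ δ_D on the cone of 4×4 distance matrices is not convex: there exist distance matrices D₁, D₂ ∈ 𝒟₄ and t ∈ (0,1) such that δ_{tD₁+(1−t)D₂} > t·δ_{D₁} + (1−t)·δ_{D₂}. -/

import Mathlib

/-- `D` is an `n × n` distance matrix. -/
def IsDistMat {n : ℕ} (D : Matrix (Fin n) (Fin n) ℝ) : Prop :=
  (∀ i j, 0 ≤ D i j) ∧ (∀ i j, D i j = D j i) ∧ (∀ i, D i i = 0) ∧
    (∀ i j k, D i j ≤ D i k + D k j)

/-- Second largest of three reals. -/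
noncomputable def secondMax (a b c : ℝ) : ℝ := min (min (max a b) (max b c)) (max a c)

/-- Gromov hyperbolicity of a `4 × 4` distance matrix via the four-point condition. -/
noncomputable def deltaMat (D : Matrix (Fin 4) (Fin 4) ℝ) : ℝ :=
  (1 / 2) * Finset.univ.sup' Finset.univ_nonempty
    (fun q : Fin 4 × Fin 4 × Fin 4 × Fin 4 =>
      let a := D q.1 q.2.1 + D q.2.2.1 q.2.2.2
      let b := D q.1 q.2.2.1 + D q.2.1 q.2.2.2
      let c := D q.1 q.2.2.2 + D q.2.1 q.2.2.1
      max a (max b c) - secondMax a b c)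

def Mat1 : Matrix (Fin 4) (Fin 4) ℝ := !![0,11,10,12; 11,0,10,10; 10,10,0,10; 12,10,10,0]
def Mat2 : Matrix (Fin 4) (Fin 4) ℝ := !![0,10,10,12; 10,0,10,11; 10,10,0,10; 12,11,10,0]

lemma deltaMat_le (D : Matrix (Fin 4) (Fin 4) ℝ) (c : ℝ)
    (h : ∀ i j k l : Fin 4,
      max (D i j + D k l) (max (D i k + D j l) (D i l + D j k))
        - secondMax (D i j + D k l) (D i k + D j l) (D i l + D j k) ≤ c) :
    deltaMat D ≤ c / 2 := by
  unfold deltaMat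
  have h2 : Finset.univ.sup' Finset.univ_nonempty
    (fun q : Fin 4 × Fin 4 × Fin 4 × Fin 4 =>
      let a := D q.1 q.2.1 + D q.2.2.1 q.2.2.2
      let b := D q.1 q.2.2.1 + D q.2.1 q.2.2.2
      let c := D q.1 q.2.2.2 + D q.2.1 q.2.2.1
      max a (max b c) - secondMax a b c) ≤ c :=
    Finset.sup'_le _ _ fun q _ => h q.1 q.2.1 q.2.2.1 q.2.2.2
  linarith

lemma le_deltaMat (D : Matrix (Fin 4) (Fin 4) ℝ) (c : ℝ) (i j k l : Fin 4)
    (h : c ≤ max (D i j + D k l) (max (D i k + D j l) (D i l + D j k))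
        - secondMax (D i j + D k l) (D i k + D j l) (D i l + D j k)) :
    c / 2 ≤ deltaMat D := by
  unfold deltaMat
  have h2 := Finset.le_sup' (f := fun q : Fin 4 × Fin 4 × Fin 4 × Fin 4 =>
      let a := D q.1 q.2.1 + D q.2.2.1 q.2.2.2
      let b := D q.1 q.2.2.1 + D q.2.1 q.2.2.2
      let c := D q.1 q.2.2.2 + D q.2.1 q.2.2.1
      max a (max b c) - secondMax a b c) (b := (i,j,k,l)) (Finset.mem_univ _)
  simp only at h2
  linarith [le_trans h h2]

set_option maxHeartbeats 2000000 in
lemma Mat1_bound : ∀ i j k l : Fin 4,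
      max (Mat1 i j + Mat1 k l) (max (Mat1 i k + Mat1 j l) (Mat1 i l + Mat1 j k))
        - secondMax (Mat1 i j + Mat1 k l) (Mat1 i k + Mat1 j l) (Mat1 i l + Mat1 j k) ≤ 1 := by
  intro i j k l
  fin_cases i <;> fin_cases j <;> fin_cases k <;> fin_cases l <;> norm_num [Mat1, secondMax]

set_option maxHeartbeats 2000000 in
lemma Mat2_bound : ∀ i j k l : Fin 4,
      max (Mat2 i j + Mat2 k l) (max (Mat2 i k + Mat2 j l) (Mat2 i l + Mat2 j k))
        - secondMax (Mat2 i j + Mat2 k l) (Mat2 i k + Mat2 j l) (Mat2 i l + Mat2 j k) ≤ 1 := by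
  intro i j k l
  fin_cases i <;> fin_cases j <;> fin_cases k <;> fin_cases l <;> norm_num [Mat2, secondMax]

set_option maxHeartbeats 1000000 in
lemma Mat1_dist : IsDistMat Mat1 := by
  refine ⟨?_, ?_, ?_, ?_⟩
  · intro i j; fin_cases i <;> fin_cases j <;> norm_num [Mat1]
  · intro i j; fin_cases i <;> fin_cases j <;> norm_num [Mat1]
  · intro i; fin_cases i <;> norm_num [Mat1]
  · intro i j k; fin_cases i <;> fin_cases j <;> fin_cases k <;> norm_num [Mat1]

set_option maxHeartbeats 1000000 in
lemma Mat2_dist : IsDistMat Mat2 := by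
  refine ⟨?_, ?_, ?_, ?_⟩
  · intro i j; fin_cases i <;> fin_cases j <;> norm_num [Mat2]
  · intro i j; fin_cases i <;> fin_cases j <;> norm_num [Mat2]
  · intro i; fin_cases i <;> norm_num [Mat2]
  · intro i j k; fin_cases i <;> fin_cases j <;> fin_cases k <;> norm_num [Mat2]

theorem deltaMat_not_convex :
    ∃ (D₁ D₂ : Matrix (Fin 4) (Fin 4) ℝ) (t : ℝ),
      IsDistMat D₁ ∧ IsDistMat D₂ ∧ 0 < t ∧ t < 1 ∧
        t * deltaMat D₁ + (1 - t) * deltaMat D₂ < deltaMat (t • D₁ + (1 - t) • D₂) := by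
  refine ⟨Mat1, Mat2, 1/2, Mat1_dist, Mat2_dist, by norm_num, by norm_num, ?_⟩
  have h1 : deltaMat Mat1 ≤ 1/2 := deltaMat_le Mat1 1 Mat1_bound
  have h2 : deltaMat Mat2 ≤ 1/2 := deltaMat_le Mat2 1 Mat2_bound
  set A : Matrix (Fin 4) (Fin 4) ℝ := (1/2 : ℝ) • Mat1 + (1 - 1/2 : ℝ) • Mat2 with hA
  have h3 : (3/2 : ℝ)/2 ≤ deltaMat A := by
    apply le_deltaMat A (3/2) 0 1 2 3
    have e : ∀ i j : Fin 4, A i j = (1/2) * Mat1 i j + (1/2) * Mat2 i j := by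
      intro i j
      simp only [hA, Matrix.add_apply, Matrix.smul_apply, smul_eq_mul]
      ring
    simp only [e]
    simp [Mat1, Mat2]
    norm_num [secondMax]
  calc 1/2 * deltaMat Mat1 + (1 - 1/2) * deltaMat Mat2 ≤ 1/2 := by linarith
    _ < (3/2)/2 := by norm_num
    _ ≤ deltaMat A := h3
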